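/- In any MV-algebra, for an element a and a positive integer n, the following are equivalent: (a) na is Boolean (na ⊕ na = na); (b) ¬a ∨ na = 1; (c) na = (n+1)a. (Here na denotes the n-fold ⊕-sum of a.) -/
import Mathlib


structure MVAlgebra (A : Type*) where
  add : A → A → A
  neg : A → A
  zero : A
  add_assoc : ∀ x y z : A, add x (add y z) = add (add x y) z
  add_comm : ∀ x y : A, add x y = add y x
  add_zero : ∀ x : A, add x zero = x
  neg_neg : ∀ x : A, neg (neg x) = x
  add_neg_zero : ∀ x : A, add x (neg zero) = neg zero
  luk : ∀ x y : A, add (neg (add (neg x) y)) y = add (neg (add (neg y) x)) x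

namespace MVAlgebra

variable {A : Type*}

/-- The top element `1 = ¬0`. -/
def one (M : MVAlgebra A) : A := M.neg M.zero

/-- The Łukasiewicz product `x ⊙ y = ¬(¬x ⊕ ¬y)`. -/
def mul (M : MVAlgebra A) (x y : A) : A := M.neg (M.add (M.neg x) (M.neg y))

/-- Truncated difference `x ⊖ y = x ⊙ ¬y`. -/
def sub (M : MVAlgebra A) (x y : A) : A := M.mul x (M.neg y)

/-- The natural order: `x ≤ y` iff `¬x ⊕ y = 1`. -/
def le (M : MVAlgebra A) (x y : A) : Prop := M.add (M.neg x) y = M.one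

/-- Lattice join `x ∨ y = (x ⊖ y) ⊕ y`. -/
def sup (M : MVAlgebra A) (x y : A) : A := M.add (M.sub x y) y

/-- Lattice meet `x ∧ y = ¬(¬x ∨ ¬y)`. -/
def inf (M : MVAlgebra A) (x y : A) : A := M.neg (M.sup (M.neg x) (M.neg y))

end MVAlgebra

namespace MVAlgebra
/-- `n`-fold Łukasiewicz sum `na = a ⊕ ⋯ ⊕ a`. -/
def nsmul {A : Type*} (M : MVAlgebra A) : ℕ → A → A
  | 0, _ => M.zero
  | n + 1, a => M.add (M.nsmul n a) a
end MVAlgebra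


namespace MVAlgebra

variable {A : Type*} (M : MVAlgebra A)

lemma zero_add' (x : A) : M.add M.zero x = x := by
  rw [M.add_comm]; exact M.add_zero x

lemma one_add' (x : A) : M.add M.one x = M.one := by
  rw [M.add_comm]; exact M.add_neg_zero x

lemma add_one' (x : A) : M.add x M.one = M.one := M.add_neg_zero x

lemma neg_one' : M.neg M.one = M.zero := M.neg_neg M.zero

lemma neg_add_self' (x : A) : M.add (M.neg x) x = M.one := by
  have h := M.luk x M.one
  rw [M.add_one', M.neg_one', M.zero_add'] at h
  exact h.symm

lemma le_antisymm' {x y : A} (h1 : M.le x y) (h2 : M.le y x) : x = y := by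
  have h := M.luk x y
  unfold le at h1 h2
  rw [h1, h2, M.neg_one', M.zero_add', M.zero_add'] at h
  exact h.symm

lemma le_add_right' (x y : A) : M.le x (M.add x y) := by
  unfold le
  rw [M.add_assoc, M.neg_add_self', M.one_add']

lemma le_add_left' (x y : A) : M.le x (M.add y x) := by
  rw [M.add_comm y x]; exact M.le_add_right' x y

lemma le_rep {a b : A} (h : M.le a b) : b = M.add a (M.neg (M.add (M.neg b) a)) := by
  have hh := M.luk a b
  unfold le at h
  rw [h, M.neg_one', M.zero_add'] at hh
  exact hh.trans (M.add_comm _ _)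

lemma le_mono {a b : A} (c : A) (h : M.le a b) : M.le (M.add c a) (M.add c b) := by
  rw [M.le_rep h, M.add_assoc]
  exact M.le_add_right' _ _

lemma le_nsmul (a : A) {n : ℕ} (hn : 1 ≤ n) : M.le a (M.nsmul n a) := by
  cases n with
  | zero => omega
  | succ m => exact M.le_add_left' a (M.nsmul m a)

lemma add_nsmul_eq (a : A) {n : ℕ} (h : M.add (M.nsmul n a) a = M.nsmul n a) (k : ℕ) :
    M.add (M.nsmul n a) (M.nsmul k a) = M.nsmul n a := by
  induction k with
  | zero => exact M.add_zero _
  | succ k ih =>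
    show M.add (M.nsmul n a) (M.add (M.nsmul k a) a) = _
    rw [M.add_assoc, ih, h]

end MVAlgebra

/-- For an element `a` of an MV-algebra and a positive integer `n`, the following are
equivalent: `na` is Boolean; `¬a ∨ na = 1`; `na = (n+1)a`. -/
theorem mv_archimedean_tfae {A : Type*} (M : MVAlgebra A) (a : A) (n : ℕ) (hn : 1 ≤ n) :
    (M.add (M.nsmul n a) (M.nsmul n a) = M.nsmul n a ↔
      M.sup (M.neg a) (M.nsmul n a) = M.one) ∧
    (M.add (M.nsmul n a) (M.nsmul n a) = M.nsmul n a ↔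
      M.nsmul n a = M.nsmul (n + 1) a) := by
  set s := M.nsmul n a with hs
  have hle : M.le s (M.add s a) := M.le_add_right' s a
  have key : (M.add s s = s) ↔ (M.add s a = s) := by
    constructor
    · intro hb
      refine M.le_antisymm' ?_ hle
      have h1 : M.le a s := M.le_nsmul a hn
      have h2 := M.le_mono s h1
      rwa [hb] at h2
    · intro hc
      have h := M.add_nsmul_eq a (n := n) (by rw [← hs]; exact hc) n
      rwa [← hs] at h
  constructor
  · rw [key]
    have hsup : M.sup (M.neg a) s = M.add (M.neg (M.add a s)) s := by
      simp only [MVAlgebra.sup, MVAlgebra.sub, MVAlgebra.mul, M.neg_neg]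
    rw [hsup]
    constructor
    · intro hc
      rw [M.add_comm a s, hc]
      exact M.neg_add_self' s
    · intro hb
      have h := M.le_antisymm' hb (M.le_add_left' s a)
      rw [M.add_comm]
      exact h
  · rw [key]
    constructor
    · intro h; exact h.symm
    · intro h; exact h.symm
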